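/- Let μ and ν be atomless probability measures on ℝ with finite first moments and K₂ < K₁ reals. Suppose there exists a martingale coupling π of μ and ν such that π({(x,y) : x < K₂ and y ≠ x}) = 0 and π({(x,y) : K₂ ≤ x ≤ K₁ and y < K₂}) = 0. Then the supremum of A(π',B) over all martingale couplings π' of μ and ν and all Borel sets B equals P_μ(K₁) + P_ν(K₂) − P_μ(K₂), and it is attained by π' = π with B = (−∞, K₁). -/
import Mathlib

open MeasureTheory Set

/-- The put price function `P_η(k) = ∫ (k-x)⁺ dη(x)`. -/
noncomputable def putPrice (η : Measure ℝ) (k : ℝ) : ℝ := ∫ x, max (k - x) 0 ∂η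

/-- `π` is a martingale coupling of `μ` and `ν`. -/
def IsMartingaleCoupling (μ ν : Measure ℝ) (π : Measure (ℝ × ℝ)) : Prop :=
  IsProbabilityMeasure π ∧ π.map Prod.fst = μ ∧ π.map Prod.snd = ν ∧
    ∀ B : Set ℝ, MeasurableSet B →
      ∫ p in B ×ˢ (Set.univ : Set ℝ), p.2 ∂π = ∫ x in B, x ∂μ

/-- The American-put payoff under coupling `π` and exercise set `B`. -/
noncomputable def amPayoff (K₁ K₂ : ℝ) (π : Measure (ℝ × ℝ)) (B : Set ℝ) : ℝ :=
  ∫ p, (B.indicator (fun x => max (K₁ - x) 0) p.1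
      + Bᶜ.indicator (fun _ => max (K₂ - p.2) 0) p.1) ∂π

namespace OptimalDeepAux

lemma put_aesm (η : Measure ℝ) (k : ℝ) : AEStronglyMeasurable (fun x => max (k - x) 0) η :=
  ((continuous_const.sub continuous_id).max continuous_const).aestronglyMeasurable

lemma coupling_fst_integrable {μ : Measure ℝ} {π' : Measure (ℝ × ℝ)}
    (hfst : π'.map Prod.fst = μ) (hμint : Integrable (fun w => w) μ) :
    Integrable (fun p : ℝ × ℝ => p.1) π' := by
  have h : Integrable (fun w : ℝ => w) (π'.map Prod.fst) := hfst ▸ hμint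
  simpa [Function.comp] using
    (integrable_map_measure aestronglyMeasurable_id measurable_fst.aemeasurable).mp h

lemma coupling_snd_integrable {ν : Measure ℝ} {π' : Measure (ℝ × ℝ)}
    (hsnd : π'.map Prod.snd = ν) (hνint : Integrable (fun w => w) ν) :
    Integrable (fun p : ℝ × ℝ => p.2) π' := by
  have h : Integrable (fun w : ℝ => w) (π'.map Prod.snd) := hsnd ▸ hνint
  simpa [Function.comp] using
    (integrable_map_measure aestronglyMeasurable_id measurable_snd.aemeasurable).mp h

lemma integral_comp_fst {μ : Measure ℝ} {π' : Measure (ℝ × ℝ)}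
    (hfst : π'.map Prod.fst = μ) {f : ℝ → ℝ} (hf : AEStronglyMeasurable f μ) :
    ∫ p : ℝ × ℝ, f p.1 ∂π' = ∫ x, f x ∂μ := by
  rw [← hfst] at hf ⊢
  exact (integral_map measurable_fst.aemeasurable hf).symm

lemma integral_comp_snd {ν : Measure ℝ} {π' : Measure (ℝ × ℝ)}
    (hsnd : π'.map Prod.snd = ν) {f : ℝ → ℝ} (hf : AEStronglyMeasurable f ν) :
    ∫ p : ℝ × ℝ, f p.2 ∂π' = ∫ x, f x ∂ν := by
  rw [← hsnd] at hf ⊢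
  exact (integral_map measurable_snd.aemeasurable hf).symm

/-- The martingale property: `∫ (y - x) dπ'` over `x ∈ B'` vanishes. -/
lemma mart_zero {μ ν : Measure ℝ} {π' : Measure (ℝ × ℝ)}
    (hπ' : IsMartingaleCoupling μ ν π')
    (hμint : Integrable (fun w => w) μ) (hνint : Integrable (fun w => w) ν)
    (B' : Set ℝ) (hB' : MeasurableSet B') :
    ∫ p, (Prod.fst ⁻¹' B').indicator (fun p : ℝ × ℝ => p.2 - p.1) p ∂π' = 0 := by
  obtain ⟨hp, hfst, hsnd, hmart⟩ := hπ'
  have hx : Integrable (fun p : ℝ × ℝ => p.1) π' := coupling_fst_integrable hfst hμint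
  have hy : Integrable (fun p : ℝ × ℝ => p.2) π' := coupling_snd_integrable hsnd hνint
  rw [integral_indicator (measurable_fst hB')]
  have h2' : ∫ p in Prod.fst ⁻¹' B', (p : ℝ × ℝ).2 ∂π' = ∫ x in B', x ∂μ := by
    rw [← Set.prod_univ]; exact hmart B' hB'
  have h1' : ∫ p in Prod.fst ⁻¹' B', (p : ℝ × ℝ).1 ∂π' = ∫ x in B', x ∂μ := by
    have e : ∫ y in B', y ∂(π'.map Prod.fst) = ∫ p in Prod.fst ⁻¹' B', (p : ℝ × ℝ).1 ∂π' :=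
      setIntegral_map hB' aestronglyMeasurable_id measurable_fst.aemeasurable
    rw [hfst] at e
    exact e.symm
  have hsub : ∫ p in Prod.fst ⁻¹' B', ((p : ℝ × ℝ).2 - p.1) ∂π'
      = (∫ p in Prod.fst ⁻¹' B', (p : ℝ × ℝ).2 ∂π')
        - ∫ p in Prod.fst ⁻¹' B', (p : ℝ × ℝ).1 ∂π' :=
    integral_sub hy.integrableOn hx.integrableOn
  rw [hsub, h1', h2', sub_self]

variable {μ ν : Measure ℝ} [IsProbabilityMeasure μ] [IsProbabilityMeasure ν]

/-- Upper bound: every American-put payoff is at most `P_μ(K₁) + P_ν(K₂) - P_μ(K₂)`. -/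
lemma amPayoff_le
    (hμint : Integrable (fun w => w) μ) (hνint : Integrable (fun w => w) ν)
    {K₁ K₂ : ℝ} (hK : K₂ < K₁)
    {π' : Measure (ℝ × ℝ)} (hπ' : IsMartingaleCoupling μ ν π')
    {B : Set ℝ} (hB : MeasurableSet B) :
    amPayoff K₁ K₂ π' B ≤ putPrice μ K₁ + putPrice ν K₂ - putPrice μ K₂ := by
  obtain ⟨hp, hfst, hsnd, hmart⟩ := hπ'
  have hx : Integrable (fun p : ℝ × ℝ => p.1) π' := coupling_fst_integrable hfst hμint
  have hy : Integrable (fun p : ℝ × ℝ => p.2) π' := coupling_snd_integrable hsnd hνint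
  have hK1 : Integrable (fun p : ℝ × ℝ => max (K₁ - p.1) 0) π' :=
    ((integrable_const K₁).sub hx).pos_part
  have hK2 : Integrable (fun p : ℝ × ℝ => max (K₂ - p.1) 0) π' :=
    ((integrable_const K₂).sub hx).pos_part
  have hK2' : Integrable (fun p : ℝ × ℝ => max (K₂ - p.2) 0) π' :=
    ((integrable_const K₂).sub hy).pos_part
  have hB' : MeasurableSet (B ∩ Iio K₂) := hB.inter measurableSet_Iio
  have hind : Integrable
      (fun p : ℝ × ℝ => (Prod.fst ⁻¹' (B ∩ Iio K₂)).indicator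
        (fun q : ℝ × ℝ => q.2 - q.1) p) π' :=
    (hy.sub hx).indicator (measurable_fst hB')
  have hG3 : Integrable
      (fun p : ℝ × ℝ => max (K₁ - p.1) 0 - max (K₂ - p.1) 0 + max (K₂ - p.2) 0) π' :=
    (hK1.sub hK2).add hK2'
  have hGint : Integrable
      (fun p : ℝ × ℝ => max (K₁ - p.1) 0 - max (K₂ - p.1) 0 + max (K₂ - p.2) 0
        + (Prod.fst ⁻¹' (B ∩ Iio K₂)).indicator (fun q : ℝ × ℝ => q.2 - q.1) p) π' :=
    hG3.add hind
  have hFint : Integrable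
      (fun p : ℝ × ℝ => B.indicator (fun x => max (K₁ - x) 0) p.1
        + Bᶜ.indicator (fun _ => max (K₂ - p.2) 0) p.1) π' := by
    have e1 : (fun p : ℝ × ℝ => B.indicator (fun x => max (K₁ - x) 0) p.1)
        = (Prod.fst ⁻¹' B).indicator (fun p : ℝ × ℝ => max (K₁ - p.1) 0) := by
      funext p
      by_cases hpB : p.1 ∈ B
      · rw [Set.indicator_of_mem hpB, Set.indicator_of_mem
          (show p ∈ Prod.fst ⁻¹' B from hpB)]
      · rw [Set.indicator_of_notMem hpB, Set.indicator_of_notMem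
          (show p ∉ Prod.fst ⁻¹' B from hpB)]
    have e2 : (fun p : ℝ × ℝ => Bᶜ.indicator (fun _ => max (K₂ - p.2) 0) p.1)
        = (Prod.fst ⁻¹' Bᶜ).indicator (fun p : ℝ × ℝ => max (K₂ - p.2) 0) := by
      funext p
      by_cases hpB : p.1 ∈ Bᶜ
      · rw [Set.indicator_of_mem hpB, Set.indicator_of_mem
          (show p ∈ Prod.fst ⁻¹' Bᶜ from hpB)]
      · rw [Set.indicator_of_notMem hpB, Set.indicator_of_notMem
          (show p ∉ Prod.fst ⁻¹' Bᶜ from hpB)]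
    have h1 : Integrable ((Prod.fst ⁻¹' B).indicator
        (fun p : ℝ × ℝ => max (K₁ - p.1) 0)) π' := hK1.indicator (measurable_fst hB)
    have h2 : Integrable ((Prod.fst ⁻¹' Bᶜ).indicator
        (fun p : ℝ × ℝ => max (K₂ - p.2) 0)) π' := hK2'.indicator (measurable_fst hB.compl)
    rw [← e1] at h1
    rw [← e2] at h2
    exact h1.add h2
  have hle : ∀ p : ℝ × ℝ,
      B.indicator (fun x => max (K₁ - x) 0) p.1
        + Bᶜ.indicator (fun _ => max (K₂ - p.2) 0) p.1
      ≤ max (K₁ - p.1) 0 - max (K₂ - p.1) 0 + max (K₂ - p.2) 0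
        + (Prod.fst ⁻¹' (B ∩ Iio K₂)).indicator (fun q : ℝ × ℝ => q.2 - q.1) p := by
    intro p
    by_cases hpB : p.1 ∈ B
    · rw [Set.indicator_of_mem hpB,
        Set.indicator_of_notMem (show p.1 ∉ Bᶜ from fun h => h hpB)]
      by_cases hpK : p.1 < K₂
      · rw [Set.indicator_of_mem
          (show p ∈ Prod.fst ⁻¹' (B ∩ Iio K₂) from ⟨hpB, hpK⟩)]
        have h1 : max (K₂ - p.1) 0 = K₂ - p.1 := max_eq_left (by linarith)
        have h2 : K₂ - p.2 ≤ max (K₂ - p.2) 0 := le_max_left _ _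
        linarith
      · rw [Set.indicator_of_notMem
          (show p ∉ Prod.fst ⁻¹' (B ∩ Iio K₂) from fun h => hpK h.2)]
        have h1 : max (K₂ - p.1) 0 = 0 := max_eq_right (by linarith [not_lt.mp hpK])
        have h2 : (0:ℝ) ≤ max (K₂ - p.2) 0 := le_max_right _ _
        linarith
    · rw [Set.indicator_of_notMem hpB,
        Set.indicator_of_mem (show p.1 ∈ Bᶜ from hpB),
        Set.indicator_of_notMem
          (show p ∉ Prod.fst ⁻¹' (B ∩ Iio K₂) from fun h => hpB h.1)]
      have h1 : max (K₂ - p.1) 0 ≤ max (K₁ - p.1) 0 := max_le_max (by linarith) le_rfl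
      linarith
  have hmain : amPayoff K₁ K₂ π' B
      ≤ ∫ p, (max (K₁ - p.1) 0 - max (K₂ - p.1) 0 + max (K₂ - p.2) 0
        + (Prod.fst ⁻¹' (B ∩ Iio K₂)).indicator (fun q : ℝ × ℝ => q.2 - q.1) p) ∂π' :=
    integral_mono hFint hGint hle
  have a1 : ∫ p, (max (K₁ - p.1) 0 - max (K₂ - p.1) 0 + max (K₂ - p.2) 0
        + (Prod.fst ⁻¹' (B ∩ Iio K₂)).indicator (fun q : ℝ × ℝ => q.2 - q.1) p) ∂π'
      = (∫ p : ℝ × ℝ, (max (K₁ - p.1) 0 - max (K₂ - p.1) 0 + max (K₂ - p.2) 0) ∂π')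
        + ∫ p, (Prod.fst ⁻¹' (B ∩ Iio K₂)).indicator (fun q : ℝ × ℝ => q.2 - q.1) p ∂π' :=
    integral_add hG3 hind
  have a2 : ∫ p : ℝ × ℝ, (max (K₁ - p.1) 0 - max (K₂ - p.1) 0 + max (K₂ - p.2) 0) ∂π'
      = (∫ p : ℝ × ℝ, (max (K₁ - p.1) 0 - max (K₂ - p.1) 0) ∂π')
        + ∫ p : ℝ × ℝ, max (K₂ - p.2) 0 ∂π' :=
    integral_add (hK1.sub hK2) hK2'
  have a3 : ∫ p : ℝ × ℝ, (max (K₁ - p.1) 0 - max (K₂ - p.1) 0) ∂π'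
      = (∫ p : ℝ × ℝ, max (K₁ - p.1) 0 ∂π') - ∫ p : ℝ × ℝ, max (K₂ - p.1) 0 ∂π' :=
    integral_sub hK1 hK2
  have a4 : ∫ p, (Prod.fst ⁻¹' (B ∩ Iio K₂)).indicator
        (fun q : ℝ × ℝ => q.2 - q.1) p ∂π' = 0 :=
    mart_zero ⟨hp, hfst, hsnd, hmart⟩ hμint hνint _ hB'
  rw [a1, a2, a3, a4, integral_comp_fst hfst (put_aesm μ K₁),
    integral_comp_fst hfst (put_aesm μ K₂), integral_comp_snd hsnd (put_aesm ν K₂)] at hmain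
  calc amPayoff K₁ K₂ π' B ≤ _ := hmain
    _ = putPrice μ K₁ + putPrice ν K₂ - putPrice μ K₂ := by unfold putPrice; ring

/-- Attainment for the given coupling with `B = Iio K₁`. -/
lemma amPayoff_attain
    (hμint : Integrable (fun w => w) μ) (hνint : Integrable (fun w => w) ν)
    {K₁ K₂ : ℝ} (hK : K₂ < K₁)
    {π : Measure (ℝ × ℝ)} (hπ : IsMartingaleCoupling μ ν π)
    (h1 : π {p : ℝ × ℝ | p.1 < K₂ ∧ p.2 ≠ p.1} = 0)
    (h2 : π {p : ℝ × ℝ | K₂ ≤ p.1 ∧ p.1 ≤ K₁ ∧ p.2 < K₂} = 0) :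
    amPayoff K₁ K₂ π (Set.Iio K₁)
      = putPrice μ K₁ + putPrice ν K₂ - putPrice μ K₂ := by
  obtain ⟨hp, hfst, hsnd, hmart⟩ := hπ
  have hx : Integrable (fun p : ℝ × ℝ => p.1) π := coupling_fst_integrable hfst hμint
  have hy : Integrable (fun p : ℝ × ℝ => p.2) π := coupling_snd_integrable hsnd hνint
  have hK1 : Integrable (fun p : ℝ × ℝ => max (K₁ - p.1) 0) π :=
    ((integrable_const K₁).sub hx).pos_part
  have hK2y : Integrable (fun p : ℝ × ℝ => max (K₂ - p.2) 0) π :=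
    ((integrable_const K₂).sub hy).pos_part
  have hS : MeasurableSet (Prod.fst ⁻¹' Iio K₁ : Set (ℝ × ℝ)) :=
    measurable_fst measurableSet_Iio
  have hind : Integrable
      (fun p : ℝ × ℝ => (Prod.fst ⁻¹' Iio K₁).indicator
        (fun q : ℝ × ℝ => max (K₂ - q.2) 0) p) π := hK2y.indicator hS
  -- rewrite the payoff integrand pointwise
  have hrw : amPayoff K₁ K₂ π (Set.Iio K₁)
      = ∫ p, (max (K₁ - p.1) 0 + (max (K₂ - p.2) 0
          - (Prod.fst ⁻¹' Iio K₁).indicator (fun q : ℝ × ℝ => max (K₂ - q.2) 0) p)) ∂π := by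
    unfold amPayoff
    congr 1
    funext p
    by_cases hpK : p.1 < K₁
    · rw [Set.indicator_of_mem (show p.1 ∈ Iio K₁ from hpK),
        Set.indicator_of_notMem (show p.1 ∉ (Iio K₁)ᶜ from fun h => h hpK),
        Set.indicator_of_mem (show p ∈ Prod.fst ⁻¹' Iio K₁ from hpK)]
      ring
    · rw [Set.indicator_of_notMem (show p.1 ∉ Iio K₁ from hpK),
        Set.indicator_of_mem (show p.1 ∈ (Iio K₁)ᶜ from hpK),
        Set.indicator_of_notMem (show p ∉ Prod.fst ⁻¹' Iio K₁ from hpK)]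
      have h0 : max (K₁ - p.1) 0 = 0 := max_eq_right (by linarith [not_lt.mp hpK])
      rw [h0]; ring
  -- the key a.e. identification on {x < K₁}
  have hae : (fun p : ℝ × ℝ => (Prod.fst ⁻¹' Iio K₁).indicator
        (fun q : ℝ × ℝ => max (K₂ - q.2) 0) p)
      =ᵐ[π] (fun p : ℝ × ℝ => (Prod.fst ⁻¹' Iio K₁).indicator
        (fun q : ℝ × ℝ => max (K₂ - q.1) 0) p) := by
    rw [Filter.eventuallyEq_iff_exists_mem]
    refine ⟨({p : ℝ × ℝ | p.1 < K₂ ∧ p.2 ≠ p.1}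
        ∪ {p : ℝ × ℝ | K₂ ≤ p.1 ∧ p.1 ≤ K₁ ∧ p.2 < K₂})ᶜ, ?_, ?_⟩
    · rw [mem_ae_iff, compl_compl]
      exact measure_union_null h1 h2
    · intro p hp
      simp only [mem_compl_iff, mem_union, mem_setOf_eq, not_or, not_and_or, not_not,
        not_lt, not_le] at hp
      obtain ⟨hpa, hpb⟩ := hp
      show (Prod.fst ⁻¹' Iio K₁).indicator (fun q : ℝ × ℝ => max (K₂ - q.2) 0) p
        = (Prod.fst ⁻¹' Iio K₁).indicator (fun q : ℝ × ℝ => max (K₂ - q.1) 0) p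
      by_cases hpK : p.1 < K₁
      · rw [Set.indicator_of_mem (show p ∈ Prod.fst ⁻¹' Iio K₁ from hpK),
          Set.indicator_of_mem (show p ∈ Prod.fst ⁻¹' Iio K₁ from hpK)]
        rcases hpa with hge | heq
        · rcases hpb with hlt | hle | hge2
          · linarith
          · linarith
          · rw [max_eq_right (by linarith), max_eq_right (by linarith)]
        · rw [heq]
      · rw [Set.indicator_of_notMem (show p ∉ Prod.fst ⁻¹' Iio K₁ from hpK),
          Set.indicator_of_notMem (show p ∉ Prod.fst ⁻¹' Iio K₁ from hpK)]
  have hIy : ∫ p, (Prod.fst ⁻¹' Iio K₁).indicator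
        (fun q : ℝ × ℝ => max (K₂ - q.2) 0) p ∂π = putPrice μ K₂ := by
    rw [integral_congr_ae hae]
    have epoint : (fun p : ℝ × ℝ => (Prod.fst ⁻¹' Iio K₁).indicator
        (fun q : ℝ × ℝ => max (K₂ - q.1) 0) p) = fun p : ℝ × ℝ => max (K₂ - p.1) 0 := by
      funext p
      by_cases hpK : p.1 < K₁
      · exact Set.indicator_of_mem (show p ∈ Prod.fst ⁻¹' Iio K₁ from hpK) _
      · rw [Set.indicator_of_notMem (show p ∉ Prod.fst ⁻¹' Iio K₁ from hpK),
          max_eq_right (by linarith [not_lt.mp hpK])]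
    rw [epoint]
    exact integral_comp_fst hfst (put_aesm μ K₂)
  have e5 : ∫ p, (max (K₁ - p.1) 0 + (max (K₂ - p.2) 0
        - (Prod.fst ⁻¹' Iio K₁).indicator (fun q : ℝ × ℝ => max (K₂ - q.2) 0) p)) ∂π
      = (∫ p : ℝ × ℝ, max (K₁ - p.1) 0 ∂π)
        + ∫ p, (max (K₂ - p.2) 0
          - (Prod.fst ⁻¹' Iio K₁).indicator (fun q : ℝ × ℝ => max (K₂ - q.2) 0) p) ∂π :=
    integral_add hK1 (hK2y.sub hind)
  have e6 : ∫ p, (max (K₂ - p.2) 0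
        - (Prod.fst ⁻¹' Iio K₁).indicator (fun q : ℝ × ℝ => max (K₂ - q.2) 0) p) ∂π
      = (∫ p : ℝ × ℝ, max (K₂ - p.2) 0 ∂π)
        - ∫ p, (Prod.fst ⁻¹' Iio K₁).indicator (fun q : ℝ × ℝ => max (K₂ - q.2) 0) p ∂π :=
    integral_sub hK2y hind
  rw [hrw, e5, e6, hIy, integral_comp_fst hfst (put_aesm μ K₁),
    integral_comp_snd hsnd (put_aesm ν K₂)]
  show putPrice μ K₁ + (putPrice ν K₂ - putPrice μ K₂) = _
  ring

end OptimalDeepAux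

open OptimalDeepAux in
/-- If there is a martingale coupling keeping mass below `K₂` constant and sending no
mass from `[K₂, K₁]` below `K₂`, the highest American-put price equals
`P_μ(K₁) + P_ν(K₂) - P_μ(K₂)`, attained by that coupling with exercise set `(-∞, K₁)`. -/
theorem optimal_model_deep_strikes
    (μ ν : Measure ℝ) [IsProbabilityMeasure μ] [IsProbabilityMeasure ν]
    (hμint : Integrable (fun w => w) μ) (hνint : Integrable (fun w => w) ν)
    (hμa : ∀ w : ℝ, μ {w} = 0) (hνa : ∀ w : ℝ, ν {w} = 0)
    (K₁ K₂ : ℝ) (hK : K₂ < K₁)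
    (π : Measure (ℝ × ℝ)) (hπ : IsMartingaleCoupling μ ν π)
    (h1 : π {p : ℝ × ℝ | p.1 < K₂ ∧ p.2 ≠ p.1} = 0)
    (h2 : π {p : ℝ × ℝ | K₂ ≤ p.1 ∧ p.1 ≤ K₁ ∧ p.2 < K₂} = 0) :
    sSup { r : ℝ | ∃ π' : Measure (ℝ × ℝ), ∃ B : Set ℝ,
        IsMartingaleCoupling μ ν π' ∧ MeasurableSet B ∧ r = amPayoff K₁ K₂ π' B }
      = putPrice μ K₁ + putPrice ν K₂ - putPrice μ K₂ ∧
    amPayoff K₁ K₂ π (Set.Iio K₁)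
      = putPrice μ K₁ + putPrice ν K₂ - putPrice μ K₂ := by
  have hatt := amPayoff_attain hμint hνint hK hπ h1 h2
  refine ⟨?_, hatt⟩
  apply IsGreatest.csSup_eq
  constructor
  · exact ⟨π, Set.Iio K₁, hπ, measurableSet_Iio, hatt.symm⟩
  · rintro r ⟨π', B, hπ', hB, rfl⟩
    exact amPayoff_le hμint hνint hK hπ' hB
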